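/- Let p > 1 and F ∈ L^p(μ). Suppose (U_λ)_{λ} are measurable maps with (U_λ)_*μ = L_λ·μ, L_λ > 0 μ-a.s., such that λ ↦ L_λ and λ ↦ L_λ^{-1} are continuous in probability with {L_λ} and {L_λ^{-1}·L_λ'} locally uniformly integrable, and λ ↦ f∘U_λ is continuous in L^q(μ) for every f ∈ L^{q'}(μ) with q' > q = p/(p−1). Then the map λ ↦ E[F | U_λ = x]·L_λ is weakly continuous in L^{p'}(μ) for every p' < p. -/

import Mathlib

open scoped ENNReal NNReal


open MeasureTheory Filter

/-- Weak continuity of `λ ↦ E[F | U_λ = x]·L_λ`: under continuity in probability of the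
densities `L_λ` and of `λ ↦ f∘U_λ` in `L^q` for `f ∈ L^{q'}` (`q' > q = p/(p-1)`),
together with local uniform integrability, the map `λ ↦ h_λ L_λ` (`h_λ` the disintegration
of `F ∈ L^p`) is weakly continuous: `λ ↦ ∫ f · h_λ L_λ dμ` is continuous for every
bounded continuous `f`. -/
theorem weak_continuity_disintegration
    {Ω : Type*} [TopologicalSpace Ω] [mΩ : MeasurableSpace Ω] [BorelSpace Ω]
    (μ : Measure Ω) [IsProbabilityMeasure μ]
    (p : ℝ) (hp : 1 < p) (q : ℝ) (hq : q = p / (p - 1))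
    (F : Ω → ℝ) (hF : MemLp F (ENNReal.ofReal p) μ)
    (U : ℝ → Ω → Ω) (hUm : ∀ l, Measurable (U l))
    (L : ℝ → Ω → ℝ) (hLm : ∀ l, Measurable (L l)) (hLpos : ∀ l, ∀ᵐ ω ∂μ, 0 < L l ω)
    (hpush : ∀ l, Measure.map (U l) μ = μ.withDensity (fun ω => ENNReal.ofReal (L l ω)))
    -- λ ↦ L_λ and λ ↦ L_λ⁻¹ are continuous in probability
    (hLc : ∀ (l : ℝ) (s : ℕ → ℝ), Tendsto s atTop (nhds l) →
      TendstoInMeasure μ (fun n => L (s n)) atTop (L l))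
    (hLinvc : ∀ (l : ℝ) (s : ℕ → ℝ), Tendsto s atTop (nhds l) →
      TendstoInMeasure μ (fun n => fun ω => (L (s n) ω)⁻¹) atTop (fun ω => (L l ω)⁻¹))
    -- local uniform integrability of {L_λ} and {L_λ⁻¹ · L_{λ'}}
    (hui : ∀ a b : ℝ, ∀ ε : ℝ, 0 < ε → ∃ δ : ℝ, 0 < δ ∧ ∀ l ∈ Set.Icc a b,
      ∀ s : Set Ω, MeasurableSet s → μ s ≤ ENNReal.ofReal δ → ∫ ω in s, L l ω ∂μ ≤ ε)
    (hui' : ∀ a b : ℝ, ∀ ε : ℝ, 0 < ε → ∃ δ : ℝ, 0 < δ ∧ ∀ l ∈ Set.Icc a b, ∀ l' ∈ Set.Icc a b,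
      ∀ s : Set Ω, MeasurableSet s → μ s ≤ ENNReal.ofReal δ →
        ∫ ω in s, (L l ω)⁻¹ * L l' ω ∂μ ≤ ε)
    -- λ ↦ f ∘ U_λ is continuous in L^q for every f ∈ L^{q'}, q' > q
    (hUc : ∀ q' : ℝ, q < q' → ∀ f : Ω → ℝ, MemLp f (ENNReal.ofReal q') μ →
      ∀ (l : ℝ) (s : ℕ → ℝ), Tendsto s atTop (nhds l) →
        Tendsto (fun n => ∫ ω, |f (U (s n) ω) - f (U l ω)| ^ q ∂μ) atTop (nhds 0))
    -- h_λ : the disintegration E[F | U_λ = x]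
    (h : ℝ → Ω → ℝ) (hhm : ∀ l, Measurable (h l))
    (hdis : ∀ l, (fun ω => h l (U l ω))
      =ᵐ[μ] μ[F | MeasurableSpace.comap (U l) inferInstance]) :
    ∀ f : BoundedContinuousFunction Ω ℝ,
      Continuous (fun l : ℝ => ∫ x, f x * (h l x * L l x) ∂μ) := by
  intro f
  have hpq : Real.HolderConjugate p q := (Real.holderConjugate_iff_eq_conjExponent hp).2 hq
  have hFint : Integrable F μ := hF.integrable (ENNReal.one_le_ofReal.2 hp.le)
  -- key identity
  have key : ∀ l, ∫ x, f x * (h l x * L l x) ∂μ = ∫ ω, f (U l ω) * F ω ∂μ := by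
    intro l
    have hm : MeasurableSpace.comap (U l) mΩ ≤ mΩ := (hUm l).comap_le
    haveI : IsFiniteMeasure (μ.trim hm) := isFiniteMeasure_trim hm
    have hUlm : Measurable[MeasurableSpace.comap (U l) mΩ] (U l) :=
      Measurable.of_comap_le le_rfl
    have hfU : StronglyMeasurable[MeasurableSpace.comap (U l) mΩ] (fun ω => f (U l ω)) :=
      (f.continuous.measurable.comp hUlm).stronglyMeasurable
    have step1 : ∫ x, f x * (h l x * L l x) ∂μ = ∫ x, f x * h l x ∂(Measure.map (U l) μ) := by
      rw [hpush l]
      have : (fun ω => ENNReal.ofReal (L l ω)) = fun ω => ((L l ω).toNNReal : ℝ≥0∞) := rfl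
      rw [this, integral_withDensity_eq_integral_smul ((show Measurable fun ω => (L l ω).toNNReal from measurable_real_toNNReal.comp (hLm l)))]
      refine integral_congr_ae ?_
      filter_upwards [hLpos l] with ω hω
      simp [NNReal.smul_def, Real.coe_toNNReal _ hω.le]
      ring
    have step2 : ∫ x, f x * h l x ∂(Measure.map (U l) μ)
        = ∫ ω, f (U l ω) * h l (U l ω) ∂μ := by
      rw [integral_map (hUm l).aemeasurable]
      exact (f.continuous.measurable.mul (hhm l)).aestronglyMeasurable
    have step3 : ∫ ω, f (U l ω) * h l (U l ω) ∂μ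
        = ∫ ω, f (U l ω) * (μ[F | MeasurableSpace.comap (U l) mΩ]) ω ∂μ := by
      refine integral_congr_ae ?_
      filter_upwards [hdis l] with ω hω
      rw [hω]
    have pull : μ[(fun ω => f (U l ω)) * F | MeasurableSpace.comap (U l) mΩ]
        =ᵐ[μ] (fun ω => f (U l ω)) * μ[F | MeasurableSpace.comap (U l) mΩ] :=
      condExp_stronglyMeasurable_mul_of_bound hm hfU hFint ‖f‖
        (Eventually.of_forall fun ω => f.norm_coe_le_norm _)
    have hint : Integrable ((fun ω => f (U l ω)) * F) μ :=
      hFint.bdd_mul ((hfU.mono hm).aestronglyMeasurable)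
        (Eventually.of_forall fun ω => f.norm_coe_le_norm _)
    have step4 : ∫ ω, f (U l ω) * (μ[F | MeasurableSpace.comap (U l) mΩ]) ω ∂μ
        = ∫ ω, f (U l ω) * F ω ∂μ := by
      calc ∫ ω, f (U l ω) * (μ[F | MeasurableSpace.comap (U l) mΩ]) ω ∂μ
          = ∫ ω, (μ[(fun ω => f (U l ω)) * F | MeasurableSpace.comap (U l) mΩ]) ω ∂μ :=
            (integral_congr_ae pull).symm
        _ = ∫ ω, f (U l ω) * F ω ∂μ := integral_condExp hm
    rw [step1, step2, step3, step4]
  simp_rw [key]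
  -- continuity via sequences
  refine SeqContinuous.continuous ?_
  intro s l hs
  rw [tendsto_sub_nhds_zero_iff.symm]
  have hfm : ∀ l', MemLp (fun ω => f (U l' ω)) (ENNReal.ofReal (q+1)) μ ∧
      MemLp (fun ω => f (U l' ω)) (ENNReal.ofReal q) μ := by
    intro l'
    constructor <;>
      exact MemLp.of_bound ((f.continuous.measurable.comp (hUm l')).aestronglyMeasurable) ‖f‖
        (Eventually.of_forall fun ω => f.norm_coe_le_norm _)
  have hfmem : MemLp (fun x => f x) (ENNReal.ofReal (q+1)) μ :=
    MemLp.of_bound f.continuous.measurable.aestronglyMeasurable ‖f‖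
      (Eventually.of_forall fun ω => f.norm_coe_le_norm _)
  have hA := hUc (q+1) (by linarith) (fun x => f x) hfmem l s hs
  -- bound the difference
  have hΔmem : ∀ n, MemLp (fun ω => f (U (s n) ω) - f (U (l : ℝ) ω)) (ENNReal.ofReal q) μ :=
    fun n => ((hfm (s n)).2).sub ((hfm l).2)
  have hbound : ∀ n, ‖(∫ ω, f (U (s n) ω) * F ω ∂μ) - ∫ ω, f (U l ω) * F ω ∂μ‖
      ≤ (∫ ω, |f (U (s n) ω) - f (U l ω)| ^ q ∂μ) ^ (1/q) * (∫ ω, ‖F ω‖ ^ p ∂μ) ^ (1/p) := by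
    intro n
    have hint : ∀ l', Integrable (fun ω => f (U l' ω) * F ω) μ := by
      intro l'
      exact hFint.bdd_mul ((f.continuous.measurable.comp (hUm l')).aestronglyMeasurable)
        (Eventually.of_forall fun ω => f.norm_coe_le_norm _)
    rw [← integral_sub (hint (s n)) (hint l)]
    have e1 : ∀ ω, f (U (s n) ω) * F ω - f (U l ω) * F ω
        = (f (U (s n) ω) - f (U l ω)) * F ω := fun ω => by ring
    simp_rw [e1]
    calc ‖∫ ω, (f (U (s n) ω) - f (U l ω)) * F ω ∂μ‖
        ≤ ∫ ω, ‖(f (U (s n) ω) - f (U l ω)) * F ω‖ ∂μ := norm_integral_le_integral_norm _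
      _ = ∫ ω, ‖f (U (s n) ω) - f (U l ω)‖ * ‖F ω‖ ∂μ := by simp_rw [norm_mul]
      _ ≤ (∫ ω, ‖f (U (s n) ω) - f (U l ω)‖ ^ q ∂μ) ^ (1/q) * (∫ ω, ‖F ω‖ ^ p ∂μ) ^ (1/p) :=
          integral_mul_norm_le_Lp_mul_Lq hpq.symm (hΔmem n) hF
      _ = (∫ ω, |f (U (s n) ω) - f (U l ω)| ^ q ∂μ) ^ (1/q) * (∫ ω, ‖F ω‖ ^ p ∂μ) ^ (1/p) := by
          norm_num [Real.norm_eq_abs]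
  refine squeeze_zero_norm hbound ?_
  have h0 : Tendsto (fun n => (∫ ω, |f (U (s n) ω) - f (U l ω)| ^ q ∂μ) ^ (1/q)) atTop (nhds 0) := by
    have := hA.rpow_const (p := 1/q) (Or.inr hpq.symm.one_div_nonneg)
    rwa [Real.zero_rpow hpq.symm.one_div_ne_zero] at this
  have := h0.mul_const ((∫ ω, ‖F ω‖ ^ p ∂μ) ^ (1/p))
  rwa [zero_mul] at this
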